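/- Let K be a field of characteristic zero. If g₁,...,gₙ ∈ K[[x]] are nonzero formal power series with pairwise distinct orders, then their Wronskian W(g₁,...,gₙ) is a nonzero power series. -/

import Mathlib

open PowerSeries

private lemma coeff_iterate_derivative {K : Type*} [Field K] (f : PowerSeries K) (i m : ℕ) :
    PowerSeries.coeff m ((fun h => PowerSeries.derivative K h)^[i] f)
      = ((m + i).descFactorial i : K) * PowerSeries.coeff (m + i) f := by
  induction i generalizing m with
  | zero => simp
  | succ i ih =>
    rw [Function.iterate_succ_apply', PowerSeries.coeff_derivative, ih]
    have h1 : (m + (i + 1)).descFactorial (i + 1)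
        = (m + 1) * ((m + 1 + i).descFactorial i) := by
      rw [show m + (i + 1) = (m + 1) + i by ring, Nat.descFactorial_succ, Nat.add_sub_cancel]
    have h2 : m + 1 + i = m + (i + 1) := by ring
    rw [h2] at *
    rw [h1]
    push_cast
    ring

private lemma sum_id_le_of_injective {n : ℕ} (d : Fin n → ℕ) (hd : Function.Injective d) :
    ∑ i : Fin n, (i : ℕ) ≤ ∑ i : Fin n, d i := by
  classical
  set s : Finset ℕ := Finset.image d Finset.univ with hs
  have hcard : s.card = n := by
    rw [hs, Finset.card_image_of_injective _ hd, Finset.card_univ, Fintype.card_fin]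
  set e := s.orderEmbOfFin hcard with he
  have key : ∀ m : ℕ, ∀ h : m < n, m ≤ e ⟨m, h⟩ := by
    intro m
    induction m with
    | zero => intro h; exact Nat.zero_le _
    | succ m ih =>
      intro h
      have h' : m < n := Nat.lt_of_succ_lt h
      have h1 := ih h'
      have h2 : e ⟨m, h'⟩ < e ⟨m + 1, h⟩ := by
        apply e.strictMono
        simp [Fin.lt_def]
      omega
  have h1 : ∑ i : Fin n, (i : ℕ) ≤ ∑ i : Fin n, e i := by
    apply Finset.sum_le_sum
    intro i _
    simpa using key i.1 i.2
  have himg : Finset.image (fun i => e i) Finset.univ = s := by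
    apply Finset.coe_injective
    rw [Finset.coe_image, Finset.coe_univ, Set.image_univ]
    exact Finset.range_orderEmbOfFin s hcard
  have h2 : ∑ i : Fin n, e i = ∑ x ∈ s, x := by
    rw [← himg, Finset.sum_image (fun a _ b _ hab => e.injective hab)]
  have h3 : ∑ x ∈ s, x = ∑ j, d j := by
    rw [hs, Finset.sum_image (fun a _ b _ hab => hd hab)]
  omega

theorem wronskian_ne_zero_of_distinct_orders {K : Type*} [Field K] [CharZero K]
    (n : ℕ) (g : Fin n → PowerSeries K) (hg : ∀ j, g j ≠ 0)
    (hord : Function.Injective fun j => (g j).order) :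
    Matrix.det (Matrix.of fun i j : Fin n =>
        (fun h => PowerSeries.derivative K h)^[(i : ℕ)] (g j)) ≠ 0 := by
  classical
  set D : PowerSeries K → PowerSeries K := fun h => PowerSeries.derivative K h with hD
  set d : Fin n → ℕ := fun j => (g j).order.toNat with hd
  have horder : ∀ j, (g j).order = (d j : ℕ∞) :=
    fun j => (ENat.coe_toNat (by simpa using hg j)).symm
  have hdinj : Function.Injective d := by
    intro a b hab
    apply hord
    simp only
    rw [horder a, horder b, hab]
  have hco : ∀ j, coeff (d j) (g j) ≠ 0 ∧ ∀ m, m < d j → coeff m (g j) = 0 :=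
    fun j => PowerSeries.order_eq_nat.mp (horder j)
  set c : Fin n → K := fun j => coeff (d j) (g j) with hc
  have hcne : ∀ j, c j ≠ 0 := fun j => (hco j).1
  set C : K := ∏ j, c j with hC
  have hCne : C ≠ 0 := Finset.prod_ne_zero_iff.mpr fun j _ => hcne j
  set N : ℕ := (∑ j, d j) - (∑ i : Fin n, (i : ℕ)) with hNdef
  have hN : N + ∑ i : Fin n, (i : ℕ) = ∑ j, d j :=
    Nat.sub_add_cancel (sum_id_le_of_injective d hdinj)
  -- key coefficient computation for each permutation
  have key : ∀ σ : Equiv.Perm (Fin n),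
      coeff N (∏ i, D^[((σ i : Fin n) : ℕ)] (g i))
        = (∏ i, ((d i).descFactorial ((σ i : Fin n) : ℕ) : K)) * C := by
    intro σ
    rw [PowerSeries.coeff_prod]
    have hσsum : ∑ i, ((σ i : Fin n) : ℕ) = ∑ i : Fin n, (i : ℕ) :=
      Equiv.sum_comp σ (fun i : Fin n => (i : ℕ))
    have hzero : ∀ l ∈ Finset.finsuppAntidiag Finset.univ N,
        (∃ i, l i + ((σ i : Fin n) : ℕ) ≠ d i) →
        ∏ i, coeff (l i) (D^[((σ i : Fin n) : ℕ)] (g i)) = 0 := by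
      rintro l hl ⟨i₀, hi₀⟩
      by_contra hne
      have hfac : ∀ i, coeff (l i) (D^[((σ i : Fin n) : ℕ)] (g i)) ≠ 0 := by
        intro i h0
        exact hne (Finset.prod_eq_zero (Finset.mem_univ i) h0)
      have hge : ∀ i, d i ≤ l i + ((σ i : Fin n) : ℕ) := by
        intro i
        by_contra hlt
        apply hfac i
        rw [hD, _root_.coeff_iterate_derivative, (hco i).2 _ (lt_of_not_ge hlt), mul_zero]
      have hlsum : ∑ i, l i = N := ((Finset.mem_finsuppAntidiag.mp hl).1)
      have hsum : ∑ i, d i = ∑ i, (l i + ((σ i : Fin n) : ℕ)) := by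
        rw [Finset.sum_add_distrib, hlsum, hσsum, hN]
      have heq := (Finset.sum_eq_sum_iff_of_le (fun i _ => hge i)).mp hsum
      exact hi₀ ((heq i₀ (Finset.mem_univ i₀)).symm)
    by_cases hall : ∀ i, ((σ i : Fin n) : ℕ) ≤ d i
    · set k₀ : Fin n →₀ ℕ :=
        Finsupp.equivFunOnFinite.symm (fun i => d i - ((σ i : Fin n) : ℕ)) with hk₀
      have hk₀app : ∀ i, k₀ i = d i - ((σ i : Fin n) : ℕ) := fun i => rfl
      have hk₀sum : ∑ i, k₀ i = N := by
        have h1 : ∑ i, (d i - ((σ i : Fin n) : ℕ)) + ∑ i, ((σ i : Fin n) : ℕ)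
            = ∑ i, d i := by
          rw [← Finset.sum_add_distrib]
          exact Finset.sum_congr rfl fun i _ => Nat.sub_add_cancel (hall i)
        have h2 : ∑ i, k₀ i = ∑ i, (d i - ((σ i : Fin n) : ℕ)) :=
          Finset.sum_congr rfl fun i _ => hk₀app i
        omega
      have hk₀mem : k₀ ∈ Finset.finsuppAntidiag Finset.univ N :=
        Finset.mem_finsuppAntidiag.mpr ⟨hk₀sum, Finset.subset_univ _⟩
      rw [Finset.sum_eq_single_of_mem k₀ hk₀mem]
      · rw [hC, ← Finset.prod_mul_distrib]
        apply Finset.prod_congr rfl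
        intro i _
        rw [hk₀app, hD, _root_.coeff_iterate_derivative, Nat.sub_add_cancel (hall i)]
      · intro l hl hlne
        apply hzero l hl
        by_contra hcon
        push_neg at hcon
        apply hlne
        ext i
        rw [hk₀app]
        have := hcon i
        omega
    · push_neg at hall
      obtain ⟨i₀, hi₀⟩ := hall
      rw [Finset.sum_eq_zero]
      · rw [Finset.prod_eq_zero (Finset.mem_univ i₀)
            (by rw [Nat.descFactorial_eq_zero_iff_lt.mpr hi₀, Nat.cast_zero]), zero_mul]
      · intro l hl
        exact hzero l hl ⟨i₀, by omega⟩
  -- auxiliary matrix of descending factorials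
  set A : Matrix (Fin n) (Fin n) K :=
    Matrix.of (fun i j : Fin n => ((d j).descFactorial (i : ℕ) : K)) with hA
  have hcoeffdet : coeff N (Matrix.det (Matrix.of fun i j : Fin n =>
      D^[(i : ℕ)] (g j))) = A.det * C := by
    rw [Matrix.det_apply, map_sum]
    have hterm : ∀ σ : Equiv.Perm (Fin n),
        coeff N (Equiv.Perm.sign σ •
          ∏ i, (Matrix.of fun i j : Fin n => D^[(i : ℕ)] (g j)) (σ i) i)
        = Equiv.Perm.sign σ • ((∏ i, ((d i).descFactorial ((σ i : Fin n) : ℕ) : K)) * C) := by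
      intro σ
      rw [Units.smul_def, Units.smul_def, map_zsmul]
      congr 1
      exact key σ
    rw [Finset.sum_congr rfl fun σ _ => hterm σ, Matrix.det_apply, Finset.sum_mul]
    apply Finset.sum_congr rfl
    intro σ _
    rw [smul_mul_assoc]
    congr 1
  have hAdet : A.det ≠ 0 := by
    set v : Fin n → K := fun i => (d i : K) with hv
    have hvinj : Function.Injective v := by
      intro a b hab
      exact hdinj (Nat.cast_injective hab)
    set B : Matrix (Fin n) (Fin n) K :=
      Matrix.of (fun i j : Fin n => Polynomial.eval (v i) (descPochhammer K (j : ℕ))) with hB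
    have hAB : A = Matrix.transpose B := by
      ext i j
      rw [hA, hB]
      simp only [Matrix.transpose_apply, Matrix.of_apply]
      rw [hv]
      rw [descPochhammer_eval_eq_descFactorial]
    have hBdet : B.det = (Matrix.vandermonde v).det := by
      rw [Matrix.det_eval_matrixOfPolynomials_eq_det_vandermonde v
        (fun j : Fin n => descPochhammer K (j : ℕ))
        (fun j => descPochhammer_natDegree K (j : ℕ))
        (fun j => monic_descPochhammer K (j : ℕ))]
    rw [hAB, Matrix.det_transpose, hBdet]
    exact Matrix.det_vandermonde_ne_zero_iff.mpr hvinj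
  intro hdet
  rw [hdet, map_zero] at hcoeffdet
  exact mul_ne_zero hAdet hCne hcoeffdet.symm
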